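/- (Lemma 5) Let f ∈ ℝ^m satisfy Lf = 0. Then Γ(f,f) = (1/2) L( f²/√(αM) ), where f²/√(αM) denotes the vector with components f_i² / √(α_i M_i). -/

import Mathlib

open Finset

/-- The discrete Boltzmann collision operator `Q`.
`A i j k l` stands for the transition rate `A^{ij}_{kl}`. -/
noncomputable def Qop {m : ℕ} (α : Fin m → ℝ) (A : Fin m → Fin m → Fin m → Fin m → ℝ)
    (F G : Fin m → ℝ) : Fin m → ℝ := fun i =>
  (1 / (2 * α i)) *
    ∑ j, ∑ k, ∑ l,
      (A i j k l * (F k * G l + F l * G k) - A k l i j * (F i * G j + F j * G i))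

/-- `φ` is a summational invariant. -/
def SummInv {m : ℕ} (α : Fin m → ℝ) (A : Fin m → Fin m → Fin m → Fin m → ℝ)
    (φ : Fin m → ℝ) : Prop :=
  ∀ i j k l, A i j k l * (φ i / α i + φ j / α j - φ k / α k - φ l / α l) = 0

/-- Multiplication by `Λ^{1/2}`, where `Λ = diag (M i / α i)`. -/
noncomputable def sqrtLam {m : ℕ} (α M : Fin m → ℝ) (f : Fin m → ℝ) : Fin m → ℝ :=
  fun i => Real.sqrt (M i / α i) * f i

/-- Multiplication by `Λ^{-1/2}`, where `Λ = diag (M i / α i)`. -/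
noncomputable def invSqrtLam {m : ℕ} (α M : Fin m → ℝ) (f : Fin m → ℝ) : Fin m → ℝ :=
  fun i => (Real.sqrt (M i / α i))⁻¹ * f i

/-- The linearized collision operator `L f = -2 Λ^{-1/2} Q (M, Λ^{1/2} f)`. -/
noncomputable def Lop {m : ℕ} (α : Fin m → ℝ) (A : Fin m → Fin m → Fin m → Fin m → ℝ)
    (M : Fin m → ℝ) (f : Fin m → ℝ) : Fin m → ℝ :=
  (-2 : ℝ) • invSqrtLam α M (Qop α A M (sqrtLam α M f))

/-- The quadratic operator `Γ (f, g) = Λ^{-1/2} Q (Λ^{1/2} f, Λ^{1/2} g)`. -/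
noncomputable def Gam {m : ℕ} (α : Fin m → ℝ) (A : Fin m → Fin m → Fin m → Fin m → ℝ)
    (M : Fin m → ℝ) (f g : Fin m → ℝ) : Fin m → ℝ :=
  invSqrtLam α M (Qop α A (sqrtLam α M f) (sqrtLam α M g))

private lemma sum4_swap12 {m : ℕ} (F : Fin m → Fin m → Fin m → Fin m → ℝ) :
    ∑ i, ∑ j, ∑ k, ∑ l, F i j k l = ∑ i, ∑ j, ∑ k, ∑ l, F j i k l :=
  Finset.sum_comm

private lemma sum4_swap_pairs {m : ℕ} (F : Fin m → Fin m → Fin m → Fin m → ℝ) :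
    ∑ i, ∑ j, ∑ k, ∑ l, F i j k l = ∑ i, ∑ j, ∑ k, ∑ l, F k l i j :=
  calc ∑ i, ∑ j, ∑ k, ∑ l, F i j k l
      = ∑ i, ∑ k, ∑ j, ∑ l, F i j k l :=
        Finset.sum_congr rfl fun i _ => Finset.sum_comm
    _ = ∑ k, ∑ i, ∑ j, ∑ l, F i j k l := Finset.sum_comm
    _ = ∑ k, ∑ i, ∑ l, ∑ j, F i j k l :=
        Finset.sum_congr rfl fun k _ => Finset.sum_congr rfl fun i _ => Finset.sum_comm
    _ = ∑ k, ∑ l, ∑ i, ∑ j, F i j k l :=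
        Finset.sum_congr rfl fun k _ => Finset.sum_comm

private lemma sum4_eq_zero {m : ℕ} {F : Fin m → Fin m → Fin m → Fin m → ℝ}
    (h0 : ∀ i j k l, 0 ≤ F i j k l)
    (h : ∑ i, ∑ j, ∑ k, ∑ l, F i j k l = 0) :
    ∀ i j k l, F i j k l = 0 := by
  intro i j k l
  have nn3 : ∀ i j k, 0 ≤ ∑ l, F i j k l := fun i j k =>
    Finset.sum_nonneg fun l _ => h0 i j k l
  have nn2 : ∀ i j, 0 ≤ ∑ k, ∑ l, F i j k l := fun i j =>
    Finset.sum_nonneg fun k _ => nn3 i j k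
  have nn1 : ∀ i, 0 ≤ ∑ j, ∑ k, ∑ l, F i j k l := fun i =>
    Finset.sum_nonneg fun j _ => nn2 i j
  have e1 := (Finset.sum_eq_zero_iff_of_nonneg (fun i _ => nn1 i)).mp h i (Finset.mem_univ i)
  have e2 := (Finset.sum_eq_zero_iff_of_nonneg (fun j _ => nn2 i j)).mp e1 j (Finset.mem_univ j)
  have e3 := (Finset.sum_eq_zero_iff_of_nonneg (fun k _ => nn3 i j k)).mp e2 k (Finset.mem_univ k)
  exact (Finset.sum_eq_zero_iff_of_nonneg (fun l _ => h0 i j k l)).mp e3 l (Finset.mem_univ l)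

private lemma Qcore {m : ℕ} {α : Fin m → ℝ} {A : Fin m → Fin m → Fin m → Fin m → ℝ}
    {M : Fin m → ℝ} (hα : ∀ i, 0 < α i) (hA : ∀ i j k l, 0 ≤ A i j k l)
    (hsym2 : ∀ i j k l, A j i k l = A i j k l)
    (hsym3 : ∀ i j k l, A k l i j = A i j k l)
    (hM : ∀ i, 0 < M i)
    (hMax : ∀ i j k l, A i j k l * (M i * M j - M k * M l) = 0)
    (w u s : Fin m → ℝ) (hsw : ∀ i, s i = M i * w i) (hu : ∀ i, u i = M i * w i ^ 2)
    (hQM : ∀ i, Qop α A M s i = 0) (i : Fin m) :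
    Qop α A s s i = -(Qop α A M u i) := by
  have hP : ∀ i j k l, A i j k l * (M i * M j) = A i j k l * (M k * M l) := fun i j k l => by
    linear_combination hMax i j k l
  have hsum0 : ∀ i, (∑ j, ∑ k, ∑ l,
      (A i j k l * (M k * s l + M l * s k) - A k l i j * (M i * s j + M j * s i))) = 0 := by
    intro i
    have h := hQM i
    simp only [Qop] at h
    rcases mul_eq_zero.mp h with h' | h'
    · exact absurd h' (one_div_ne_zero (by have := hα i; positivity))
    · exact h'
  have key1 : ∀ i j k l, A i j k l * (M k * M l) * (w i + w j - w k - w l)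
      = -(A i j k l * (M k * s l + M l * s k) - A k l i j * (M i * s j + M j * s i)) := by
    intro i j k l
    rw [hsym3 i j k l, hsw i, hsw j, hsw k, hsw l]
    linear_combination (-(w i + w j)) * hP i j k l
  have hBD0 : ∀ i, (∑ j, ∑ k, ∑ l,
      A i j k l * (M k * M l) * (w i + w j - w k - w l)) = 0 := by
    intro i
    calc (∑ j, ∑ k, ∑ l, A i j k l * (M k * M l) * (w i + w j - w k - w l))
        = ∑ j, ∑ k, ∑ l, -(A i j k l * (M k * s l + M l * s k)
            - A k l i j * (M i * s j + M j * s i)) :=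
          Finset.sum_congr rfl fun j _ => Finset.sum_congr rfl fun k _ =>
            Finset.sum_congr rfl fun l _ => key1 i j k l
      _ = -(∑ j, ∑ k, ∑ l, (A i j k l * (M k * s l + M l * s k)
            - A k l i j * (M i * s j + M j * s i))) := by
          simp [Finset.sum_neg_distrib]
      _ = 0 := by rw [hsum0 i, neg_zero]
  have hS1 : (∑ i, ∑ j, ∑ k, ∑ l,
      w i * (A i j k l * (M k * M l) * (w i + w j - w k - w l))) = 0 := by
    refine Finset.sum_eq_zero fun i _ => ?_
    simp only [← Finset.mul_sum]
    rw [hBD0 i, mul_zero]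
  have hS2 : (∑ i, ∑ j, ∑ k, ∑ l,
      w j * (A i j k l * (M k * M l) * (w i + w j - w k - w l))) = 0 := by
    refine Eq.trans (sum4_swap12 _) ?_
    refine Eq.trans (Finset.sum_congr rfl fun i _ => Finset.sum_congr rfl fun j _ =>
      Finset.sum_congr rfl fun k _ => Finset.sum_congr rfl fun l _ => ?_) hS1
    rw [hsym2 i j k l]
    ring
  have hS3 : (∑ i, ∑ j, ∑ k, ∑ l,
      w k * (A i j k l * (M k * M l) * (w i + w j - w k - w l))) = 0 := by
    refine Eq.trans (sum4_swap_pairs _) ?_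
    have step : ∀ i j k l, w i * (A k l i j * (M i * M j) * (w k + w l - w i - w j))
        = -(w i * (A i j k l * (M k * M l) * (w i + w j - w k - w l))) := by
      intro i j k l
      rw [hsym3 i j k l]
      linear_combination (w i * (w k + w l - w i - w j)) * hP i j k l
    refine Eq.trans (Finset.sum_congr rfl fun i _ => Finset.sum_congr rfl fun j _ =>
      Finset.sum_congr rfl fun k _ => Finset.sum_congr rfl fun l _ => step i j k l) ?_
    simp only [Finset.sum_neg_distrib]
    rw [hS1, neg_zero]
  have hS4 : (∑ i, ∑ j, ∑ k, ∑ l,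
      w l * (A i j k l * (M k * M l) * (w i + w j - w k - w l))) = 0 := by
    refine Eq.trans (sum4_swap_pairs _) ?_
    have step : ∀ i j k l, w j * (A k l i j * (M i * M j) * (w k + w l - w i - w j))
        = -(w j * (A i j k l * (M k * M l) * (w i + w j - w k - w l))) := by
      intro i j k l
      rw [hsym3 i j k l]
      linear_combination (w j * (w k + w l - w i - w j)) * hP i j k l
    refine Eq.trans (Finset.sum_congr rfl fun i _ => Finset.sum_congr rfl fun j _ =>
      Finset.sum_congr rfl fun k _ => Finset.sum_congr rfl fun l _ => step i j k l) ?_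
    simp only [Finset.sum_neg_distrib]
    rw [hS2, neg_zero]
  have hT : (∑ i, ∑ j, ∑ k, ∑ l,
      A i j k l * (M k * M l) * (w i + w j - w k - w l) ^ 2) = 0 := by
    have expand : ∀ i j k l, A i j k l * (M k * M l) * (w i + w j - w k - w l) ^ 2
        = w i * (A i j k l * (M k * M l) * (w i + w j - w k - w l))
          + w j * (A i j k l * (M k * M l) * (w i + w j - w k - w l))
          - w k * (A i j k l * (M k * M l) * (w i + w j - w k - w l))
          - w l * (A i j k l * (M k * M l) * (w i + w j - w k - w l)) := fun i j k l => by
      ring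
    refine Eq.trans (Finset.sum_congr rfl fun i _ => Finset.sum_congr rfl fun j _ =>
      Finset.sum_congr rfl fun k _ => Finset.sum_congr rfl fun l _ => expand i j k l) ?_
    simp only [Finset.sum_sub_distrib, Finset.sum_add_distrib]
    rw [hS1, hS2, hS3, hS4]
    ring
  have hAD : ∀ i j k l, A i j k l * (w i + w j - w k - w l) = 0 := by
    intro i j k l
    have h0 : A i j k l * (M k * M l) * (w i + w j - w k - w l) ^ 2 = 0 :=
      sum4_eq_zero (fun a b c d => mul_nonneg (mul_nonneg (hA a b c d)
        (mul_pos (hM c) (hM d)).le) (sq_nonneg _)) hT i j k l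
    rcases mul_eq_zero.mp h0 with h1 | h1
    · rcases mul_eq_zero.mp h1 with h2 | h2
      · rw [h2, zero_mul]
      · exact absurd h2 (mul_pos (hM k) (hM l)).ne'
    · rw [pow_eq_zero_iff (two_ne_zero)] at h1
      rw [h1, mul_zero]
  have key2 : ∀ j k l, A i j k l * (s k * s l + s l * s k) - A k l i j * (s i * s j + s j * s i)
      = -(A i j k l * (M k * u l + M l * u k) - A k l i j * (M i * u j + M j * u i)) := by
    intro j k l
    rw [hsym3 i j k l, hu i, hu j, hu k, hu l, hsw i, hsw j, hsw k, hsw l]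
    linear_combination (-(w i + w j) ^ 2) * hP i j k l
      + (-(M k * M l) * (w i + w j + w k + w l)) * hAD i j k l
  simp only [Qop]
  have hsum : (∑ j, ∑ k, ∑ l,
      (A i j k l * (s k * s l + s l * s k) - A k l i j * (s i * s j + s j * s i)))
      = -(∑ j, ∑ k, ∑ l,
      (A i j k l * (M k * u l + M l * u k) - A k l i j * (M i * u j + M j * u i))) := by
    refine Eq.trans (Finset.sum_congr rfl fun j _ => Finset.sum_congr rfl fun k _ =>
      Finset.sum_congr rfl fun l _ => key2 j k l) ?_
    simp only [Finset.sum_neg_distrib]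
  rw [hsum]
  ring

/-- Lemma 5: if `Lf = 0` then `Γ(f,f) = (1/2) L (f²/√(αM))`, where
`f²/√(αM)` has components `f_i² / √(α_i M_i)`. -/
theorem Gam_eq_half_Lop_of_ker {m : ℕ} (hm : 1 ≤ m)
    (α : Fin m → ℝ) (hα : ∀ i, 0 < α i)
    (A : Fin m → Fin m → Fin m → Fin m → ℝ) (hA : ∀ i j k l, 0 ≤ A i j k l)
    (hsym1 : ∀ i j k l, A i j l k = A i j k l)
    (hsym2 : ∀ i j k l, A j i k l = A i j k l)
    (hsym3 : ∀ i j k l, A k l i j = A i j k l)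
    (M : Fin m → ℝ) (hM : ∀ i, 0 < M i)
    (hMax : ∀ i j k l, A i j k l * (M i * M j - M k * M l) = 0)
    (f : Fin m → ℝ) (hf : Lop α A M f = 0) :
    Gam α A M f f =
      (1 / 2 : ℝ) • Lop α A M (fun i => (f i) ^ 2 / Real.sqrt (α i * M i)) := by
  have hsw : ∀ i, sqrtLam α M f i = M i * (sqrtLam α M f i / M i) := fun i =>
    (mul_div_cancel₀ _ (hM i).ne').symm
  have hu : ∀ i, sqrtLam α M (fun i => (f i) ^ 2 / Real.sqrt (α i * M i)) i
      = M i * (sqrtLam α M f i / M i) ^ 2 := by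
    intro i
    have h1 : (0:ℝ) < α i := hα i
    have h2 : (0:ℝ) < M i := hM i
    have e1 : Real.sqrt (M i / α i) = Real.sqrt (M i) / Real.sqrt (α i) :=
      Real.sqrt_div h2.le _
    have e2 : Real.sqrt (α i * M i) = Real.sqrt (α i) * Real.sqrt (M i) :=
      Real.sqrt_mul h1.le _
    have e3 : Real.sqrt (α i) ^ 2 = α i := Real.sq_sqrt h1.le
    have e4 : Real.sqrt (M i) ^ 2 = M i := Real.sq_sqrt h2.le
    have p3 : Real.sqrt (α i) ≠ 0 := by positivity
    have p4 : Real.sqrt (M i) ≠ 0 := by positivity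
    simp only [sqrtLam]
    rw [e1, e2]
    field_simp
    linear_combination (-(f i ^ 2)) * e4
  have hQM : ∀ i, Qop α A M (sqrtLam α M f) i = 0 := by
    intro i
    have h := congrFun hf i
    simp only [Lop, invSqrtLam, Pi.smul_apply, smul_eq_mul, Pi.zero_apply] at h
    have hne : (Real.sqrt (M i / α i))⁻¹ ≠ 0 :=
      inv_ne_zero (Real.sqrt_pos.mpr (div_pos (hM i) (hα i))).ne'
    rcases mul_eq_zero.mp h with h' | h'
    · norm_num at h'
    · rcases mul_eq_zero.mp h' with h'' | h''
      · exact absurd h'' hne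
      · exact h''
  have hc : ∀ i, Qop α A (sqrtLam α M f) (sqrtLam α M f) i
      = -(Qop α A M (sqrtLam α M (fun i => (f i) ^ 2 / Real.sqrt (α i * M i))) i) :=
    Qcore hα hA hsym2 hsym3 hM hMax (fun i => sqrtLam α M f i / M i) _ _ hsw hu hQM
  funext i
  simp only [Gam, Lop, invSqrtLam, Pi.smul_apply, smul_eq_mul]
  rw [hc i]
  ring
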